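/- Let G be a finite group, p a prime, and O a ring of algebraic integers in which p is totally ramified. Let u = Σ u_g g be a normalized torsion unit in OG of order p^j·m with m ≠ 1, and let 𝔭 be a prime ideal of O containing pO. Then for every s ∈ G, the sum of ε_x(u) over conjugacy classes x^G with x^{p^j} conjugate to s is congruent to ε_s(u^{p^j}) modulo 𝔭. -/

import Mathlib

open scoped Classical

section WagnerAux

variable {R : Type*} [CommRing R] {G : Type*} [Group G] [Fintype G]

/-- Partial-augmentation style sum of coefficients over a predicate. -/
noncomputable def wtSum (P : G → Prop) (v : MonoidAlgebra R G) : R :=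
  ∑ x ∈ Finset.univ.filter P, v.coeff x

lemma wtSum_eq (P : G → Prop) (v : MonoidAlgebra R G) :
    wtSum P v = ∑ x : G, if P x then v.coeff x else 0 := by
  rw [wtSum, Finset.sum_filter]

lemma wtSum_mul (P : G → Prop) (v w : MonoidAlgebra R G) :
    wtSum P (v * w) = ∑ g : G, v.coeff g * wtSum (fun h => P (g * h)) w := by
  have h1 : ∀ x : G, (v * w).coeff x = ∑ a : G, ∑ c : G, if a * c = x then v.coeff a * w.coeff c else 0 := by
    intro x
    rw [MonoidAlgebra.coeff_mul, Finsupp.sum_fintype]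
    · refine Finset.sum_congr rfl fun a _ => ?_
      rw [Finsupp.sum_fintype]
      intro c; simp
    · intro a; simp [Finsupp.sum]
  calc wtSum P (v * w)
      = ∑ x ∈ Finset.univ.filter P, ∑ a : G, ∑ c : G, if a * c = x then v.coeff a * w.coeff c else 0 :=
        Finset.sum_congr rfl fun x _ => h1 x
    _ = ∑ a : G, ∑ c : G, ∑ x ∈ Finset.univ.filter P, if a * c = x then v.coeff a * w.coeff c else 0 := by
        rw [Finset.sum_comm]
        exact Finset.sum_congr rfl fun a _ => Finset.sum_comm
    _ = ∑ a : G, ∑ c : G, if P (a * c) then v.coeff a * w.coeff c else 0 := by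
        refine Finset.sum_congr rfl fun a _ => Finset.sum_congr rfl fun c _ => ?_
        rw [Finset.sum_ite_eq]
        simp
    _ = ∑ g : G, v.coeff g * wtSum (fun h => P (g * h)) w := by
        refine Finset.sum_congr rfl fun a _ => ?_
        rw [wtSum_eq, Finset.mul_sum]
        exact Finset.sum_congr rfl fun c _ => by rw [mul_ite, mul_zero]

lemma wtSum_pow (n : ℕ) : ∀ (P : G → Prop) (v : MonoidAlgebra R G),
    wtSum P (v ^ n)
      = ∑ g : Fin n → G, if P ((List.ofFn g).prod) then ∏ i, v.coeff (g i) else 0 := by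
  induction n with
  | zero =>
      intro P v
      rw [pow_zero, wtSum]
      have h1 : ∀ x : G, (1 : MonoidAlgebra R G).coeff x = if (1 : G) = x then 1 else 0 := by
        intro x; rw [MonoidAlgebra.one_def, MonoidAlgebra.coeff_single, Finsupp.single_apply]
      rw [Finset.sum_congr rfl fun x _ => h1 x, Finset.sum_ite_eq]
      rw [Fintype.sum_unique]
      simp
  | succ n ih =>
      intro P v
      rw [pow_succ', wtSum_mul]
      have h2 : ∀ g : G, wtSum (fun h => P (g * h)) (v ^ n)
          = ∑ t : Fin n → G, if P (g * (List.ofFn t).prod) then ∏ i, v.coeff (t i) else 0 :=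
        fun g => ih _ v
      calc ∑ g : G, v.coeff g * wtSum (fun h => P (g * h)) (v ^ n)
          = ∑ g : G, ∑ t : Fin n → G,
              if P (g * (List.ofFn t).prod) then v.coeff g * ∏ i, v.coeff (t i) else 0 := by
            refine Finset.sum_congr rfl fun g _ => ?_
            rw [h2, Finset.mul_sum]
            exact Finset.sum_congr rfl fun t _ => by rw [mul_ite, mul_zero]
        _ = ∑ z : G × (Fin n → G),
              if P (z.1 * (List.ofFn z.2).prod) then v.coeff z.1 * ∏ i, v.coeff (z.2 i) else 0 := by
            rw [Fintype.sum_prod_type]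
        _ = ∑ g : Fin (n+1) → G, if P ((List.ofFn g).prod) then ∏ i, v.coeff (g i) else 0 := by
            refine Fintype.sum_equiv (Fin.consEquiv (fun _ => G)) _ _ ?_
            rintro ⟨a, t⟩
            have h3 : (List.ofFn (Fin.cons a t : Fin (n+1) → G)).prod
                = a * (List.ofFn t).prod := by
              rw [List.ofFn_succ]
              simp [Fin.cons_zero, Fin.cons_succ]
            have h4 : (∏ i : Fin (n+1), v.coeff ((Fin.cons a t : Fin (n+1) → G) i))
                = v.coeff a * ∏ i : Fin n, v.coeff (t i) := by
              rw [Fin.prod_univ_succ]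
              simp [Fin.cons_zero, Fin.cons_succ]
            have h5 : ((Fin.consEquiv fun _ => G) (a, t) : Fin (n+1) → G) = Fin.cons a t := rfl
            rw [h5, h3, h4]

/-- conjugate elements have conjugate powers -/
lemma isConj_pow_of_isConj {a b : G} (h : IsConj a b) (n : ℕ) : IsConj (a ^ n) (b ^ n) := by
  obtain ⟨c, hc⟩ := isConj_iff.mp h
  exact isConj_iff.mpr ⟨c, by rw [← hc, conj_pow]⟩

open Fin.NatCast in
/-- The key step: the "Frobenius trace" congruence for a single prime power. -/
lemma key_step {p : ℕ} (hp : p.Prime) (hp0 : ((p : ℕ) : R) = 0) (hfrob : ∀ r : R, r ^ p = r)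
    (P : G → Prop) (hP : ∀ a b : G, IsConj a b → (P a ↔ P b)) (v : MonoidAlgebra R G) :
    wtSum (fun x => P (x ^ p)) v = wtSum P (v ^ p) := by
  haveI : Fact p.Prime := ⟨hp⟩
  obtain ⟨q, rfl⟩ : ∃ q, p = q + 1 := ⟨p - 1, (Nat.succ_pred_eq_of_pos hp.pos).symm⟩
  set p := q + 1
  rw [wtSum_pow p P v]
  set F : (Fin p → G) → R := fun g => if P ((List.ofFn g).prod) then ∏ i, v.coeff (g i) else 0
    with hF
  set rot : Fin p → (Fin p → G) → (Fin p → G) := fun k g => fun i => g (i + k) with hrot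
  set Qc : (Fin p → G) → Prop := fun g => ∃ c, ∀ i, g i = c with hQc
  -- basic facts about `rot`
  have r0 : ∀ g, rot 0 g = g := by intro g; funext i; simp [hrot]
  have rr : ∀ k l g, rot k (rot l g) = rot (k + l) g := by
    intro k l g; funext i; simp [hrot, add_assoc]
  -- products of rotated tuples are conjugate
  have conj1 : ∀ g : Fin p → G,
      (List.ofFn (rot 1 g)).prod = (g 0)⁻¹ * (List.ofFn g).prod * (g 0) := by
    intro g
    have e1 : List.ofFn (rot 1 g) = (List.ofFn fun i : Fin q => g i.succ).concat (g 0) := by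
      rw [List.ofFn_succ' (rot 1 g)]
      congr 1
      · refine congrArg _ (funext fun i => ?_)
        simp only [hrot]
        rw [Fin.coeSucc_eq_succ]
      · simp only [hrot]
        rw [Fin.last_add_one]
    have e2 : (List.ofFn g).prod = g 0 * (List.ofFn fun i : Fin q => g i.succ).prod := by
      rw [List.ofFn_succ, List.prod_cons]
    rw [e1, List.prod_concat, e2]
    group
  -- v-products of rotated tuples agree
  have prodv : ∀ (k : Fin p) (g : Fin p → G), (∏ i, v.coeff (rot k g i)) = ∏ i, v.coeff (g i) := by
    intro k g
    exact Fintype.prod_equiv (Equiv.addRight k) _ _ (fun i => by simp [hrot])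
  -- F is invariant under rotation by 1
  have F1 : ∀ g, F (rot 1 g) = F g := by
    intro g
    have hc : IsConj ((List.ofFn (rot 1 g)).prod) ((List.ofFn g).prod) := by
      rw [conj1 g]
      exact isConj_iff.mpr ⟨g 0, by group⟩
    exact if_congr (hP _ _ hc) (prodv 1 g) rfl
  -- F is invariant under all rotations
  have Fk : ∀ (k : Fin p) (g), F (rot k g) = F g := by
    have Fn : ∀ (n : ℕ) (g), F (rot ((n : Fin p)) g) = F g := by
      intro n
      induction n with
      | zero => intro g; rw [Nat.cast_zero, r0]
      | succ n ihn =>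
          intro g
          have : ((n + 1 : ℕ) : Fin p) = 1 + (n : Fin p) := by push_cast; exact add_comm _ _
          rw [this, ← rr 1 ((n : Fin p)) g, F1, ihn]
    intro k g
    have : k = ((k.val : ℕ) : Fin p) := (Fin.cast_val_eq_self k).symm
    rw [this]; exact Fn k.val g
  -- non-constant tuples have free orbits
  have inj : ∀ g : Fin p → G, ¬ Qc g → Function.Injective fun k => rot k g := by
    intro g hg k l hkl
    by_contra hne
    have hd : k - l ≠ 0 := sub_ne_zero_of_ne hne
    have hshift : ∀ i, g (i + (k - l)) = g i := by
      intro i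
      have h1 := congrFun hkl (i - l)
      simp only [hrot] at h1
      have e1 : i - l + k = i + (k - l) := by abel
      have e2 : i - l + l = i := by abel
      rw [e1, e2] at h1
      exact h1
    set d := k - l with hdd
    have hns : ∀ (n : ℕ) (i), g (i + n • d) = g i := by
      intro n
      induction n with
      | zero => intro i; simp
      | succ n ihn =>
          intro i
          rw [succ_nsmul, ← add_assoc, hshift, ihn]
    have horder : addOrderOf d = p := addOrderOf_eq_prime (by
        have : (Fintype.card (Fin p)) • d = 0 := card_nsmul_eq_zero
        rwa [Fintype.card_fin] at this) hd
    have hinj2 : Function.Injective fun n : Fin p => (n.val) • d := by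
      have key : ∀ n m : Fin p, n.val < m.val → (n.val) • d = (m.val) • d → False := by
        intro n m hlt heq
        have h2 : (m.val - n.val + n.val) • d = n.val • d := by
          rw [Nat.sub_add_cancel hlt.le, ← heq]
        rw [add_nsmul] at h2
        have h3 : (m.val - n.val) • d = 0 := add_eq_right.mp h2
        have h4 : addOrderOf d ∣ m.val - n.val := addOrderOf_dvd_iff_nsmul_eq_zero.mpr h3
        rw [horder] at h4
        have h5 : p ≤ m.val - n.val := Nat.le_of_dvd (by omega) h4
        have := m.isLt
        omega
      intro n m h
      rcases lt_trichotomy n.val m.val with h' | h' | h'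
      · exact absurd h (by intro hh; exact key n m h' hh)
      · exact Fin.ext h'
      · exact absurd h (by intro hh; exact key m n h' hh.symm)
    have hsurj := Finite.injective_iff_surjective.mp hinj2
    apply hg
    refine ⟨g 0, fun i => ?_⟩
    obtain ⟨n, hn⟩ := hsurj i
    have := hns n.val 0
    rw [zero_add] at this
    simp only at hn
    rw [← hn, this]
  -- rotations preserve non-constancy
  have rotQc : ∀ (k : Fin p) (g), Qc (rot k g) → Qc g := by
    rintro k g ⟨c, hc⟩
    refine ⟨c, fun j => ?_⟩
    have := hc (j - k)
    simp only [hrot] at this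
    rwa [sub_add_cancel] at this
  -- the sum of F over any rot-closed set of non-constant tuples vanishes
  have horb : ∀ N : Finset (Fin p → G), (∀ g ∈ N, ¬ Qc g) →
      (∀ (k : Fin p) (g), g ∈ N → rot k g ∈ N) → ∑ g ∈ N, F g = 0 := by
    intro N
    induction N using Finset.strongInduction with
    | _ N ih =>
      intro hN hcl
      rcases N.eq_empty_or_nonempty with rfl | ⟨g, hg⟩
      · simp
      set Ob : Finset (Fin p → G) := Finset.image (fun k => rot k g) Finset.univ with hOb
      have hObN : Ob ⊆ N := by
        intro h hh
        rw [hOb, Finset.mem_image] at hh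
        obtain ⟨k, _, rfl⟩ := hh
        exact hcl k g hg
      have hgOb : g ∈ Ob := by
        rw [hOb, Finset.mem_image]
        exact ⟨0, Finset.mem_univ 0, r0 g⟩
      have hsub : N \ Ob ⊂ N := Finset.sdiff_ssubset hObN ⟨g, hgOb⟩
      have hMnc : ∀ h ∈ N \ Ob, ¬ Qc h := fun h hh => hN h (Finset.mem_sdiff.mp hh).1
      have hMcl : ∀ (k : Fin p) (h), h ∈ N \ Ob → rot k h ∈ N \ Ob := by
        intro k h hh
        rw [Finset.mem_sdiff] at hh ⊢
        refine ⟨hcl k h hh.1, fun hmem => hh.2 ?_⟩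
        rw [hOb, Finset.mem_image] at hmem
        obtain ⟨l, _, hl⟩ := hmem
        have : h = rot (-k + l) g := by
          rw [← rr, hl, rr, neg_add_cancel, r0]
        rw [hOb, Finset.mem_image]
        exact ⟨-k + l, Finset.mem_univ _, this.symm⟩
      have hObsum : ∑ h ∈ Ob, F h = 0 := by
        rw [hOb, Finset.sum_image (fun a _ b _ hab => inj g (hN g hg) hab)]
        rw [Finset.sum_congr rfl fun k _ => Fk k g, Finset.sum_const, Finset.card_univ,
          Fintype.card_fin, nsmul_eq_mul, hp0, zero_mul]
      calc ∑ h ∈ N, F h = ∑ h ∈ N \ Ob, F h + ∑ h ∈ Ob, F h := (Finset.sum_sdiff hObN).symm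
        _ = 0 := by rw [hObsum, ih _ hsub hMnc hMcl, add_zero]
  -- value of F on constant tuples
  have Fconst : ∀ a : G, F (fun _ => a) = if P (a ^ p) then v.coeff a else 0 := by
    intro a
    have e1 : (List.ofFn fun _ : Fin p => a).prod = a ^ p := by
      rw [List.ofFn_const, List.prod_replicate]
    have e2 : (∏ _i : Fin p, v.coeff a) = v.coeff a := by
      rw [Finset.prod_const, Finset.card_univ, Fintype.card_fin, hfrob]
    rw [hF]; simp only [e1, e2]
  -- sum over constant tuples
  have hconst : ∑ g ∈ Finset.univ.filter Qc, F g = ∑ a : G, if P (a ^ p) then v.coeff a else 0 := by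
    refine Finset.sum_nbij' (i := fun g => g 0) (j := fun a => fun _ => a) ?_ ?_ ?_ ?_ ?_
    · intro a _; exact Finset.mem_univ _
    · intro a _
      rw [Finset.mem_filter]
      exact ⟨Finset.mem_univ _, a, fun _ => rfl⟩
    · intro g hgm
      rw [Finset.mem_filter] at hgm
      obtain ⟨c, hc⟩ := hgm.2
      funext i
      show g 0 = g i
      rw [hc i, hc 0]
    · intro a _; rfl
    · intro g hgm
      rw [Finset.mem_filter] at hgm
      obtain ⟨c, hc⟩ := hgm.2
      have h6 := Fconst (g 0)
      have h7 : g = fun _ => g 0 := funext fun i => by rw [hc i, hc 0]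
      rw [← h7] at h6
      exact h6
  -- put everything together
  have hsplit := Finset.sum_filter_add_sum_filter_not (Finset.univ : Finset (Fin p → G)) Qc F
  have hzero : ∑ g ∈ Finset.univ.filter (fun g => ¬ Qc g), F g = 0 :=
    horb _ (fun g hgm => (Finset.mem_filter.mp hgm).2)
      (fun k g hgm => by
        rw [Finset.mem_filter] at hgm ⊢
        exact ⟨Finset.mem_univ _, fun hq => hgm.2 (rotQc k g hq)⟩)
  rw [← hsplit, hzero, add_zero, hconst, wtSum_eq]

/-- Iterated version. -/
lemma wt_iter {p : ℕ} (hp : p.Prime) (hp0 : ((p : ℕ) : R) = 0) (hfrob : ∀ r : R, r ^ p = r) :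
    ∀ (j : ℕ) (v : MonoidAlgebra R G) (s : G),
      wtSum (fun x => IsConj (x ^ p ^ j) s) v = wtSum (fun x => IsConj s x) (v ^ p ^ j) := by
  intro j
  induction j with
  | zero =>
      intro v s
      have e : (fun x : G => IsConj (x ^ p ^ 0) s) = fun x => IsConj s x := by
        funext x; rw [pow_zero, pow_one]; exact propext isConj_comm
      rw [e, pow_zero, pow_one]
  | succ j ih =>
      intro v s
      have e : (fun x : G => IsConj (x ^ p ^ (j + 1)) s)
          = fun x => IsConj ((x ^ p) ^ p ^ j) s := by
        funext x; rw [← pow_mul, ← pow_succ']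
      rw [e]
      have hQ : ∀ a b : G, IsConj a b → (IsConj (a ^ p ^ j) s ↔ IsConj (b ^ p ^ j) s) := by
        intro a b hab
        have h1 := isConj_pow_of_isConj hab (p ^ j)
        exact ⟨fun h => h1.symm.trans h, fun h => h1.trans h⟩
      rw [key_step hp hp0 hfrob _ hQ v, ih (v ^ p) s, ← pow_mul, ← pow_succ']

/-- coefficientwise map of monoid algebras along a ring hom -/
noncomputable def coeffMap {A B : Type*} [CommRing A] [CommRing B] (f : A →+* B) :
    MonoidAlgebra A G →+* MonoidAlgebra B G :=
  MonoidAlgebra.liftNCRingHom (MonoidAlgebra.singleOneRingHom.comp f) (MonoidAlgebra.of B G)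
    (fun a g => by
      show Commute (MonoidAlgebra.single 1 (f a)) (MonoidAlgebra.single g 1)
      show MonoidAlgebra.single 1 (f a) * MonoidAlgebra.single g 1
        = MonoidAlgebra.single g 1 * MonoidAlgebra.single 1 (f a)
      rw [MonoidAlgebra.single_mul_single, MonoidAlgebra.single_mul_single,
        one_mul, mul_one, one_mul, mul_one])

lemma coeffMap_single {A B : Type*} [CommRing A] [CommRing B] (f : A →+* B) (a : G) (b : A) :
    coeffMap f (MonoidAlgebra.single a b) = MonoidAlgebra.single a (f b) := by
  rw [coeffMap]
  show MonoidAlgebra.liftNC _ _ (MonoidAlgebra.single a b) = _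
  rw [MonoidAlgebra.liftNC_single]
  show MonoidAlgebra.singleOneRingHom (f b) * MonoidAlgebra.of B G a = _
  rw [MonoidAlgebra.of_apply]
  show MonoidAlgebra.single 1 (f b) * MonoidAlgebra.single a 1 = _
  rw [MonoidAlgebra.single_mul_single, one_mul, mul_one]

lemma coeffMap_single' {A B : Type*} [CommRing A] [CommRing B] (f : A →+* B) (a : G) (b : A) :
    coeffMap f (MonoidAlgebra.ofCoeff (Finsupp.single a b))
      = MonoidAlgebra.ofCoeff (Finsupp.single a (f b)) := coeffMap_single f a b

lemma coeffMap_apply {A B : Type*} [CommRing A] [CommRing B] (f : A →+* B)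
    (u : MonoidAlgebra A G) (x : G) : (coeffMap f u).coeff x = f (u.coeff x) := by
  induction u using MonoidAlgebra.induction_linear with
  | zero => simp
  | add y z ihy ihz =>
      rw [map_add, MonoidAlgebra.coeff_add, MonoidAlgebra.coeff_add, Finsupp.add_apply,
        Finsupp.add_apply, ihy, ihz, map_add]
  | single a b =>
      rw [coeffMap_single, MonoidAlgebra.coeff_single, MonoidAlgebra.coeff_single,
        Finsupp.single_apply, Finsupp.single_apply, apply_ite f, map_zero]

end WagnerAux

set_option synthInstance.maxHeartbeats 1000000 in
set_option maxHeartbeats 1000000 in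
/-- Proposition 5.6 ("Wagner test") -/
theorem wagner_test {K : Type*} [Field K] [NumberField K]
    {G : Type*} [Group G] [Fintype G]
    (p : ℕ) (hp : p.Prime)
    (hram : ∀ P : Ideal (NumberField.RingOfIntegers K), P.IsPrime → P ≠ ⊥ →
      (p : NumberField.RingOfIntegers K) ∈ P →
      Nat.card (NumberField.RingOfIntegers K ⧸ P) = p)
    (u : MonoidAlgebra (NumberField.RingOfIntegers K) G) (hu : IsUnit u)
    (haug : ∑ g : G, u.coeff g = 1)
    (j m : ℕ) (hm : m ≠ 1) (hpm : ¬ p ∣ m) (hord : orderOf u = p ^ j * m)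
    (𝔭 : Ideal (NumberField.RingOfIntegers K)) (h𝔭 : 𝔭.IsPrime)
    (hp𝔭 : (p : NumberField.RingOfIntegers K) ∈ 𝔭) (s : G) :
    (∑ x ∈ Finset.univ.filter (fun x : G => IsConj (x ^ p ^ j) s), u.coeff x)
      - (∑ x ∈ Finset.univ.filter (fun x : G => IsConj s x), (u ^ p ^ j).coeff x) ∈ 𝔭 := by
  have h𝔭ne : 𝔭 ≠ ⊥ := by
    intro h
    rw [h, Ideal.mem_bot] at hp𝔭
    exact hp.ne_zero (by exact_mod_cast hp𝔭)
  have hcard : Nat.card (NumberField.RingOfIntegers K ⧸ 𝔭) = p := hram 𝔭 h𝔭 h𝔭ne hp𝔭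
  have hfrob : ∀ r : NumberField.RingOfIntegers K ⧸ 𝔭, r ^ p = r := by
    intro r
    haveI : 𝔭.IsMaximal := h𝔭.isMaximal h𝔭ne
    haveI : Finite (NumberField.RingOfIntegers K ⧸ 𝔭) :=
      Nat.finite_of_card_ne_zero (by rw [hcard]; exact hp.ne_zero)
    haveI : Fintype (NumberField.RingOfIntegers K ⧸ 𝔭) := Fintype.ofFinite _
    letI : Field (NumberField.RingOfIntegers K ⧸ 𝔭) := Ideal.Quotient.field 𝔭
    have h := FiniteField.pow_card r
    rwa [← Nat.card_eq_fintype_card, hcard] at h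
  have hp0 : ((p : ℕ) : NumberField.RingOfIntegers K ⧸ 𝔭) = 0 := by
    rw [← map_natCast (Ideal.Quotient.mk 𝔭) p]
    exact Ideal.Quotient.eq_zero_iff_mem.mpr hp𝔭
  rw [← Ideal.Quotient.eq]
  have key := wt_iter (R := NumberField.RingOfIntegers K ⧸ 𝔭) (G := G) hp hp0 hfrob j
    (coeffMap (Ideal.Quotient.mk 𝔭) u) s
  rw [wtSum, wtSum, ← map_pow] at key
  simp only [coeffMap_apply] at key
  rw [map_sum, map_sum]
  convert key using 2 <;> · ext x; simp
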